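/- The automorphism group of the graph Γ_m is the cyclic group generated by g = (1,2,...,m)(m+1,m+2,m+3,m+4)(m+5,m+6); in particular Aut(Γ_m) ≅ ℤ/2^n ℤ. -/

import Mathlib

/-- One-directional edge description of the graph `Γ_m`, on labels `1,…,m+6`. -/
def rel0 (m a b : ℕ) : Prop :=
  (1 ≤ a ∧ a ≤ m - 1 ∧ b = a + 1) ∨ (a = 1 ∧ b = m) ∨
  (a = m+1 ∧ 1 ≤ b ∧ b ≤ m ∧ (b % 4 = 1 ∨ b % 4 = 2)) ∨
  (a = m+2 ∧ 1 ≤ b ∧ b ≤ m ∧ (b % 4 = 2 ∨ b % 4 = 3)) ∨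
  (a = m+3 ∧ 1 ≤ b ∧ b ≤ m ∧ (b % 4 = 3 ∨ b % 4 = 0)) ∨
  (a = m+4 ∧ 1 ≤ b ∧ b ≤ m ∧ (b % 4 = 0 ∨ b % 4 = 1)) ∨
  (a = m+5 ∧ 1 ≤ b ∧ b ≤ m ∧ b % 2 = 1) ∨
  (a = m+6 ∧ 1 ≤ b ∧ b ≤ m ∧ b % 2 = 0) ∨
  (a = m+1 ∧ b = m+5) ∨ (a = m+3 ∧ b = m+5) ∨
  (a = m+2 ∧ b = m+6) ∨ (a = m+4 ∧ b = m+6)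

instance (m a b : ℕ) : Decidable (rel0 m a b) := by unfold rel0; infer_instance

/-- The graph `Γ_m` on vertex set `{1,…,m+6}`, encoded on `Fin (m+6)`
    where the vertex `v : Fin (m+6)` carries the label `v.val + 1`. -/
def Gamma (m : ℕ) : SimpleGraph (Fin (m+6)) where
  Adj a b := a ≠ b ∧ (rel0 m (a.val+1) (b.val+1) ∨ rel0 m (b.val+1) (a.val+1))
  symm := by constructor; intro a b h; exact ⟨fun e => h.1 e.symm, h.2.symm⟩
  loopless := by constructor; intro a h; exact h.1 rfl

instance (m : ℕ) : DecidableRel (Gamma m).Adj := fun a b =>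
  inferInstanceAs (Decidable (a ≠ b ∧ _))

/-- The permutation `g = (1,2,…,m)(m+1,m+2,m+3,m+4)(m+5,m+6)` on labels,
    written on `Fin (m+6)` (label = index + 1). -/
def gFun (m : ℕ) (v : Fin (m+6)) : Fin (m+6) :=
  if h : v.val < m then ⟨(v.val + 1) % m, lt_of_lt_of_le (Nat.mod_lt _ (by omega)) (by omega)⟩
  else if h2 : v.val < m + 3 then ⟨v.val + 1, by omega⟩
  else if h3 : v.val = m + 3 then ⟨m, by omega⟩
  else if h4 : v.val = m + 4 then ⟨m + 5, by omega⟩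
  else ⟨m + 4, by omega⟩

/-- index-level (0-based) one-directional edge relation -/
def rel1 (m i j : ℕ) : Prop :=
  (i + 1 ≤ m - 1 ∧ j = i + 1) ∨ (i = 0 ∧ j = m - 1) ∨
  (i = m ∧ j < m ∧ (j % 4 = 0 ∨ j % 4 = 1)) ∨
  (i = m+1 ∧ j < m ∧ (j % 4 = 1 ∨ j % 4 = 2)) ∨
  (i = m+2 ∧ j < m ∧ (j % 4 = 2 ∨ j % 4 = 3)) ∨
  (i = m+3 ∧ j < m ∧ (j % 4 = 3 ∨ j % 4 = 0)) ∨
  (i = m+4 ∧ j < m ∧ j % 2 = 0) ∨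
  (i = m+5 ∧ j < m ∧ j % 2 = 1) ∨
  (i = m ∧ j = m+4) ∨ (i = m+2 ∧ j = m+4) ∨
  (i = m+1 ∧ j = m+5) ∨ (i = m+3 ∧ j = m+5)

theorem rel0_iff {m : ℕ} (hm : 4 ≤ m) (i j : ℕ) :
    rel0 m (i+1) (j+1) ↔ rel1 m i j := by
  unfold rel0 rel1
  constructor
  · rintro (h|h|h|h|h|h|h|h|h|h|h|h)
    · exact Or.inl (by omega)
    · exact Or.inr (Or.inl (by omega))
    · exact Or.inr (Or.inr (Or.inl (by omega)))
    · exact Or.inr (Or.inr (Or.inr (Or.inl (by omega))))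
    · exact Or.inr (Or.inr (Or.inr (Or.inr (Or.inl (by omega)))))
    · exact Or.inr (Or.inr (Or.inr (Or.inr (Or.inr (Or.inl (by omega))))))
    · exact Or.inr (Or.inr (Or.inr (Or.inr (Or.inr (Or.inr (Or.inl (by omega)))))))
    · exact Or.inr (Or.inr (Or.inr (Or.inr (Or.inr (Or.inr (Or.inr (Or.inl (by omega))))))))
    · exact Or.inr (Or.inr (Or.inr (Or.inr (Or.inr (Or.inr (Or.inr (Or.inr (Or.inl (by omega)))))))))
    · exact Or.inr (Or.inr (Or.inr (Or.inr (Or.inr (Or.inr (Or.inr (Or.inr (Or.inr (Or.inl (by omega))))))))))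
    · exact Or.inr (Or.inr (Or.inr (Or.inr (Or.inr (Or.inr (Or.inr (Or.inr (Or.inr (Or.inr (Or.inl (by omega)))))))))))
    · exact Or.inr (Or.inr (Or.inr (Or.inr (Or.inr (Or.inr (Or.inr (Or.inr (Or.inr (Or.inr (Or.inr (by omega)))))))))))
  · rintro (h|h|h|h|h|h|h|h|h|h|h|h)
    · exact Or.inl (by omega)
    · exact Or.inr (Or.inl (by omega))
    · exact Or.inr (Or.inr (Or.inl (by omega)))
    · exact Or.inr (Or.inr (Or.inr (Or.inl (by omega))))
    · exact Or.inr (Or.inr (Or.inr (Or.inr (Or.inl (by omega)))))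
    · exact Or.inr (Or.inr (Or.inr (Or.inr (Or.inr (Or.inl (by omega))))))
    · exact Or.inr (Or.inr (Or.inr (Or.inr (Or.inr (Or.inr (Or.inl (by omega)))))))
    · exact Or.inr (Or.inr (Or.inr (Or.inr (Or.inr (Or.inr (Or.inr (Or.inl (by omega))))))))
    · exact Or.inr (Or.inr (Or.inr (Or.inr (Or.inr (Or.inr (Or.inr (Or.inr (Or.inl (by omega)))))))))
    · exact Or.inr (Or.inr (Or.inr (Or.inr (Or.inr (Or.inr (Or.inr (Or.inr (Or.inr (Or.inl (by omega))))))))))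
    · exact Or.inr (Or.inr (Or.inr (Or.inr (Or.inr (Or.inr (Or.inr (Or.inr (Or.inr (Or.inr (Or.inl (by omega)))))))))))
    · exact Or.inr (Or.inr (Or.inr (Or.inr (Or.inr (Or.inr (Or.inr (Or.inr (Or.inr (Or.inr (Or.inr (by omega)))))))))))

/-- symmetric index-level adjacency -/
def E (m i j : ℕ) : Prop := ¬ (i = j) ∧ (rel1 m i j ∨ rel1 m j i)

theorem adj_iff {m : ℕ} (hm : 4 ≤ m) (u v : Fin (m+6)) :
    (Gamma m).Adj u v ↔ E m u.val v.val := by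
  show (u ≠ v ∧ _) ↔ _
  exact and_congr (not_congr (Fin.ext_iff))
    (or_congr (rel0_iff hm _ _) (rel0_iff hm _ _))

section Main

variable {m : ℕ}

/-- value description of gFun -/
theorem gFun_spec (hm : 4 ≤ m) (v : Fin (m+6)) :
    (v.val < m - 1 ∧ (gFun m v).val = v.val + 1) ∨ (v.val = m - 1 ∧ (gFun m v).val = 0) ∨
    (m ≤ v.val ∧ v.val < m+3 ∧ (gFun m v).val = v.val + 1) ∨ (v.val = m+3 ∧ (gFun m v).val = m) ∨
    (v.val = m+4 ∧ (gFun m v).val = m+5) ∨ (v.val = m+5 ∧ (gFun m v).val = m+4) := by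
  have hb := v.isLt
  unfold gFun
  split_ifs with h1 h2 h3 h4
  · by_cases hv : v.val = m - 1
    · right; left
      refine ⟨hv, ?_⟩
      show (v.val + 1) % m = 0
      have : v.val + 1 = m := by omega
      rw [this, Nat.mod_self]
    · left
      refine ⟨by omega, ?_⟩
      show (v.val + 1) % m = v.val + 1
      exact Nat.mod_eq_of_lt (by omega)
  · right; right; left; exact ⟨by omega, by omega, rfl⟩
  · right; right; right; left; exact ⟨h3, rfl⟩
  · right; right; right; right; left; exact ⟨h4, rfl⟩
  · right; right; right; right; right; exact ⟨by omega, rfl⟩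


theorem E_symm {m i j : ℕ} (h : E m i j) : E m j i :=
  ⟨fun e => h.1 e.symm, h.2.symm⟩

section rel1intro
variable {m i j : ℕ}
theorem r1 (h1 : i+1 ≤ m-1) (h2 : j = i+1) : rel1 m i j := Or.inl ⟨h1, h2⟩
theorem r2 (h1 : i = 0) (h2 : j = m-1) : rel1 m i j := Or.inr (Or.inl ⟨h1, h2⟩)
theorem r3 (h1 : i = m) (h2 : j < m) (h3 : j % 4 = 0 ∨ j % 4 = 1) : rel1 m i j :=
  Or.inr (Or.inr (Or.inl ⟨h1, h2, h3⟩))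
theorem r4 (h1 : i = m+1) (h2 : j < m) (h3 : j % 4 = 1 ∨ j % 4 = 2) : rel1 m i j :=
  Or.inr (Or.inr (Or.inr (Or.inl ⟨h1, h2, h3⟩)))
theorem r5 (h1 : i = m+2) (h2 : j < m) (h3 : j % 4 = 2 ∨ j % 4 = 3) : rel1 m i j :=
  Or.inr (Or.inr (Or.inr (Or.inr (Or.inl ⟨h1, h2, h3⟩))))
theorem r6 (h1 : i = m+3) (h2 : j < m) (h3 : j % 4 = 3 ∨ j % 4 = 0) : rel1 m i j :=
  Or.inr (Or.inr (Or.inr (Or.inr (Or.inr (Or.inl ⟨h1, h2, h3⟩)))))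
theorem r7 (h1 : i = m+4) (h2 : j < m) (h3 : j % 2 = 0) : rel1 m i j :=
  Or.inr (Or.inr (Or.inr (Or.inr (Or.inr (Or.inr (Or.inl ⟨h1, h2, h3⟩))))))
theorem r8 (h1 : i = m+5) (h2 : j < m) (h3 : j % 2 = 1) : rel1 m i j :=
  Or.inr (Or.inr (Or.inr (Or.inr (Or.inr (Or.inr (Or.inr (Or.inl ⟨h1, h2, h3⟩)))))))
theorem r9 (h1 : i = m) (h2 : j = m+4) : rel1 m i j :=
  Or.inr (Or.inr (Or.inr (Or.inr (Or.inr (Or.inr (Or.inr (Or.inr (Or.inl ⟨h1, h2⟩))))))))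
theorem r10 (h1 : i = m+2) (h2 : j = m+4) : rel1 m i j :=
  Or.inr (Or.inr (Or.inr (Or.inr (Or.inr (Or.inr (Or.inr (Or.inr (Or.inr (Or.inl ⟨h1, h2⟩)))))))))
theorem r11 (h1 : i = m+1) (h2 : j = m+5) : rel1 m i j :=
  Or.inr (Or.inr (Or.inr (Or.inr (Or.inr (Or.inr (Or.inr (Or.inr (Or.inr (Or.inr (Or.inl ⟨h1, h2⟩))))))))))
theorem r12 (h1 : i = m+3) (h2 : j = m+5) : rel1 m i j :=
  Or.inr (Or.inr (Or.inr (Or.inr (Or.inr (Or.inr (Or.inr (Or.inr (Or.inr (Or.inr (Or.inr ⟨h1, h2⟩))))))))))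
end rel1intro

def gSpec (m x x' : ℕ) : Prop :=
  (x < m - 1 ∧ x' = x + 1) ∨ (x = m - 1 ∧ x' = 0) ∨
  (m ≤ x ∧ x < m+3 ∧ x' = x + 1) ∨ (x = m+3 ∧ x' = m) ∨
  (x = m+4 ∧ x' = m+5) ∨ (x = m+5 ∧ x' = m+4)

theorem core_fwd {m i j i' j' : ℕ} (hm4 : m % 4 = 0) (hm : 4 ≤ m)
    (hu : gSpec m i i') (hv : gSpec m j j') (h : rel1 m i j) : E m i' j' := by
  unfold gSpec at hu hv
  rcases h with c|c|c|c|c|c|c|c|c|c|c|c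
  · by_cases hjm : j = m - 1
    · exact ⟨by omega, Or.inr (r2 (by omega) (by omega))⟩
    · exact ⟨by omega, Or.inl (r1 (by omega) (by omega))⟩
  · exact ⟨by omega, Or.inr (r1 (by omega) (by omega))⟩
  · exact ⟨by omega, Or.inl (r4 (by omega) (by omega) (by omega))⟩
  · exact ⟨by omega, Or.inl (r5 (by omega) (by omega) (by omega))⟩
  · exact ⟨by omega, Or.inl (r6 (by omega) (by omega) (by omega))⟩
  · exact ⟨by omega, Or.inl (r3 (by omega) (by omega) (by omega))⟩
  · exact ⟨by omega, Or.inl (r8 (by omega) (by omega) (by omega))⟩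
  · exact ⟨by omega, Or.inl (r7 (by omega) (by omega) (by omega))⟩
  · exact ⟨by omega, Or.inl (r11 (by omega) (by omega))⟩
  · exact ⟨by omega, Or.inl (r12 (by omega) (by omega))⟩
  · exact ⟨by omega, Or.inl (r10 (by omega) (by omega))⟩
  · exact ⟨by omega, Or.inl (r9 (by omega) (by omega))⟩

theorem core_inv {m i j i' j' : ℕ} (hm4 : m % 4 = 0) (hm : 4 ≤ m)
    (hu : gSpec m i' i) (hv : gSpec m j' j) (h : rel1 m i j) : E m i' j' := by
  unfold gSpec at hu hv
  rcases h with c|c|c|c|c|c|c|c|c|c|c|c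
  · by_cases hi0 : i = 0
    · exact ⟨by omega, Or.inr (r2 (by omega) (by omega))⟩
    · exact ⟨by omega, Or.inl (r1 (by omega) (by omega))⟩
  · exact ⟨by omega, Or.inr (r1 (by omega) (by omega))⟩
  · exact ⟨by omega, Or.inl (r6 (by omega) (by omega) (by omega))⟩
  · exact ⟨by omega, Or.inl (r3 (by omega) (by omega) (by omega))⟩
  · exact ⟨by omega, Or.inl (r4 (by omega) (by omega) (by omega))⟩
  · exact ⟨by omega, Or.inl (r5 (by omega) (by omega) (by omega))⟩
  · exact ⟨by omega, Or.inl (r8 (by omega) (by omega) (by omega))⟩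
  · exact ⟨by omega, Or.inl (r7 (by omega) (by omega) (by omega))⟩
  · exact ⟨by omega, Or.inl (r12 (by omega) (by omega))⟩
  · exact ⟨by omega, Or.inl (r11 (by omega) (by omega))⟩
  · exact ⟨by omega, Or.inl (r9 (by omega) (by omega))⟩
  · exact ⟨by omega, Or.inl (r10 (by omega) (by omega))⟩

theorem gFun_gSpec (hm : 4 ≤ m) (v : Fin (m+6)) : gSpec m v.val (gFun m v).val := by
  unfold gSpec; exact gFun_spec hm v

theorem gFun_E (hm4 : m % 4 = 0) (hm : 4 ≤ m) (u v : Fin (m+6)) (h : E m u.val v.val) :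
    E m (gFun m u).val (gFun m v).val := by
  obtain ⟨hne, h | h⟩ := h
  · exact core_fwd hm4 hm (gFun_gSpec hm u) (gFun_gSpec hm v) h
  · exact E_symm (core_fwd hm4 hm (gFun_gSpec hm v) (gFun_gSpec hm u) h)

def gInvFun (m : ℕ) (v : Fin (m+6)) : Fin (m+6) :=
  if v.val = 0 then ⟨m-1, by omega⟩
  else if v.val < m then ⟨v.val - 1, by omega⟩
  else if v.val = m then ⟨m+3, by omega⟩
  else if v.val < m+4 then ⟨v.val - 1, by omega⟩
  else if v.val = m+4 then ⟨m+5, by omega⟩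
  else ⟨m+4, by omega⟩

theorem gInvFun_spec (hm : 4 ≤ m) (v : Fin (m+6)) :
    (v.val = 0 ∧ (gInvFun m v).val = m-1) ∨ (0 < v.val ∧ v.val < m ∧ (gInvFun m v).val = v.val - 1) ∨
    (v.val = m ∧ (gInvFun m v).val = m+3) ∨ (m < v.val ∧ v.val < m+4 ∧ (gInvFun m v).val = v.val - 1) ∨
    (v.val = m+4 ∧ (gInvFun m v).val = m+5) ∨ (v.val = m+5 ∧ (gInvFun m v).val = m+4) := by
  have hb := v.isLt
  unfold gInvFun
  split_ifs with h1 h2 h3 h4 h5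
  · exact Or.inl ⟨h1, rfl⟩
  · exact Or.inr (Or.inl ⟨by omega, h2, rfl⟩)
  · exact Or.inr (Or.inr (Or.inl ⟨h3, rfl⟩))
  · exact Or.inr (Or.inr (Or.inr (Or.inl ⟨by omega, h4, rfl⟩)))
  · exact Or.inr (Or.inr (Or.inr (Or.inr (Or.inl ⟨h5, rfl⟩))))
  · exact Or.inr (Or.inr (Or.inr (Or.inr (Or.inr ⟨by omega, rfl⟩))))

theorem gFun_left_inv (hm : 4 ≤ m) (v : Fin (m+6)) : gInvFun m (gFun m v) = v := by
  have h1 := gFun_spec hm v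
  have h2 := gInvFun_spec hm (gFun m v)
  have hb := v.isLt
  exact Fin.ext (by omega)

theorem gFun_right_inv (hm : 4 ≤ m) (v : Fin (m+6)) : gFun m (gInvFun m v) = v := by
  have h1 := gInvFun_spec hm v
  have h2 := gFun_spec hm (gInvFun m v)
  have hb := v.isLt
  exact Fin.ext (by omega)

/-- the automorphism `g` -/
theorem gInvFun_gSpec (hm : 4 ≤ m) (v : Fin (m+6)) : gSpec m (gInvFun m v).val v.val := by
  have h := gInvFun_spec hm v
  have hb := v.isLt
  unfold gSpec
  omega

theorem gInvFun_E (hm4 : m % 4 = 0) (hm : 4 ≤ m) (u v : Fin (m+6)) (h : E m u.val v.val) :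
    E m (gInvFun m u).val (gInvFun m v).val := by
  obtain ⟨hne, h | h⟩ := h
  · exact core_inv hm4 hm (gInvFun_gSpec hm u) (gInvFun_gSpec hm v) h
  · exact E_symm (core_inv hm4 hm (gInvFun_gSpec hm v) (gInvFun_gSpec hm u) h)

def phi (m : ℕ) (hm4 : m % 4 = 0) (hm : 4 ≤ m) : Gamma m ≃g Gamma m :=
  RelIso.mk (Equiv.mk (gFun m) (gInvFun m) (gFun_left_inv hm) (gFun_right_inv hm))
    (by
      intro a b
      rw [adj_iff hm, adj_iff hm]
      simp only [Equiv.coe_fn_mk]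
      constructor
      · intro h
        have h1 := gInvFun_E hm4 hm _ _ h
        rwa [gFun_left_inv hm, gFun_left_inv hm] at h1
      · exact gFun_E hm4 hm a b)

theorem aut_one_apply (v : Fin (m+6)) : (1 : Gamma m ≃g Gamma m) v = v := rfl

theorem phi_pow_val (hm4 : m % 4 = 0) (hm : 4 ≤ m) (k : ℕ) (v : Fin (m+6)) :
    (v.val < m → (((phi m hm4 hm) ^ k) v).val = (v.val + k) % m) ∧
    (m ≤ v.val → v.val < m + 4 → (((phi m hm4 hm) ^ k) v).val = m + (v.val + k) % 4) ∧
    (m + 4 ≤ v.val → (((phi m hm4 hm) ^ k) v).val = m + 4 + (v.val + k) % 2) := by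
  induction k generalizing v with
  | zero =>
    rw [pow_zero, aut_one_apply]
    refine ⟨fun h => ?_, fun h1 h2 => ?_, fun h => ?_⟩
    · exact (Nat.mod_eq_of_lt (by omega)).symm
    · have hb := v.isLt; omega
    · have hb := v.isLt; omega
  | succ k ih =>
    have hmul : ((phi m hm4 hm) ^ (k+1)) v = ((phi m hm4 hm) ^ k) ((phi m hm4 hm) v) := by
      rw [pow_succ]; rfl
    have hspec : gSpec m v.val ((phi m hm4 hm) v).val := gFun_gSpec hm v
    unfold gSpec at hspec
    rw [hmul]
    have ihc := ih ((phi m hm4 hm) v)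
    refine ⟨fun h => ?_, fun h1 h2 => ?_, fun h => ?_⟩
    · rcases hspec with ⟨h3, h4⟩|⟨h3, h4⟩|⟨h3, h4, h5⟩|⟨h3, h4⟩|⟨h3, h4⟩|⟨h3, h4⟩ <;> try omega
      · rw [ihc.1 (by omega), h4, show v.val + (k+1) = v.val + 1 + k by omega]
      · rw [ihc.1 (by omega), h4, show v.val + (k+1) = m + k by omega]
        rw [Nat.add_mod_left, Nat.zero_add]
    · rcases hspec with ⟨h3, h4⟩|⟨h3, h4⟩|⟨h3, h4, h5⟩|⟨h3, h4⟩|⟨h3, h4⟩|⟨h3, h4⟩ <;> omega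
    · rcases hspec with ⟨h3, h4⟩|⟨h3, h4⟩|⟨h3, h4, h5⟩|⟨h3, h4⟩|⟨h3, h4⟩|⟨h3, h4⟩ <;> omega

theorem phi_pow_m (hm4 : m % 4 = 0) (hm : 4 ≤ m) : (phi m hm4 hm) ^ m = 1 := by
  apply RelIso.ext
  intro v
  apply Fin.ext
  rw [aut_one_apply]
  have h := phi_pow_val hm4 hm m v
  have hb := v.isLt
  by_cases h1 : v.val < m
  · rw [h.1 h1, Nat.add_mod_right, Nat.mod_eq_of_lt h1]
  · by_cases h2 : v.val < m + 4
    · rw [h.2.1 (by omega) h2]; omega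
    · rw [h.2.2 (by omega)]; omega

theorem phi_order (hm4 : m % 4 = 0) (hm : 4 ≤ m) : orderOf (phi m hm4 hm) = m := by
  have hdvd : orderOf (phi m hm4 hm) ∣ m := orderOf_dvd_of_pow_eq_one (phi_pow_m hm4 hm)
  have h2 : (phi m hm4 hm) ^ (orderOf (phi m hm4 hm)) = 1 := pow_orderOf_eq_one _
  have h3 : (((phi m hm4 hm) ^ (orderOf (phi m hm4 hm))) (⟨0, by omega⟩ : Fin (m+6))).val = 0 := by
    rw [h2, aut_one_apply]
  have h4 := (phi_pow_val hm4 hm (orderOf (phi m hm4 hm)) ⟨0, by omega⟩).1 (by simpa using by omega)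
  simp only [Nat.zero_add] at h4
  have h5 : orderOf (phi m hm4 hm) % m = 0 := by
    rw [h3] at h4; omega
  exact Nat.dvd_antisymm hdvd (Nat.dvd_of_mod_eq_zero h5)

theorem card_filter_val {N mm : ℕ} (h : mm ≤ N) (p : ℕ → Prop) [DecidablePred p] :
    (Finset.univ.filter (fun u : Fin N => u.val < mm ∧ p u.val)).card
      = ((Finset.range mm).filter p).card := by
  apply Finset.card_bij (fun u _ => u.val)
  · intro a ha
    simp only [Finset.mem_filter, Finset.mem_univ, true_and] at ha
    simp only [Finset.mem_filter, Finset.mem_range]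
    exact ha
  · intro a _ b _ hab
    exact Fin.ext hab
  · intro b hb
    simp only [Finset.mem_filter, Finset.mem_range] at hb
    refine ⟨⟨b, by omega⟩, ?_, rfl⟩
    simp only [Finset.mem_filter, Finset.mem_univ, true_and]
    exact hb

theorem card_mod4 {mm r : ℕ} (h4 : mm % 4 = 0) (hr : r < 4) :
    ((Finset.range mm).filter (fun j => j % 4 = r)).card = mm / 4 := by
  have h : mm / 4 = (Finset.range (mm/4)).card := (Finset.card_range _).symm
  rw [h]
  apply Finset.card_bij (fun j _ => j / 4)
  · intro a ha; simp only [Finset.mem_filter, Finset.mem_range] at ha ⊢; omega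
  · intro a ha b hb hab
    simp only [Finset.mem_filter, Finset.mem_range] at ha hb
    omega
  · intro b hb
    simp only [Finset.mem_range] at hb
    refine ⟨4*b + r, ?_, by omega⟩
    simp only [Finset.mem_filter, Finset.mem_range]
    omega

theorem card_mod2 {mm r : ℕ} (h4 : mm % 2 = 0) (hr : r < 2) :
    ((Finset.range mm).filter (fun j => j % 2 = r)).card = mm / 2 := by
  have h : mm / 2 = (Finset.range (mm/2)).card := (Finset.card_range _).symm
  rw [h]
  apply Finset.card_bij (fun j _ => j / 2)
  · intro a ha; simp only [Finset.mem_filter, Finset.mem_range] at ha ⊢; omega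
  · intro a ha b hb hab
    simp only [Finset.mem_filter, Finset.mem_range] at ha hb
    omega
  · intro b hb
    simp only [Finset.mem_range] at hb
    refine ⟨2*b + r, ?_, by omega⟩
    simp only [Finset.mem_filter, Finset.mem_range]
    omega

theorem card_five {α : Type*} [DecidableEq α] {a b c d e : α}
    (h1 : a ≠ b) (h2 : a ≠ c) (h3 : a ≠ d) (h4 : a ≠ e) (h5 : b ≠ c) (h6 : b ≠ d) (h7 : b ≠ e)
    (h8 : c ≠ d) (h9 : c ≠ e) (h10 : d ≠ e) : ({a,b,c,d,e} : Finset α).card = 5 := by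
  rw [Finset.card_insert_of_notMem (by simp [h1,h2,h3,h4]),
      Finset.card_insert_of_notMem (by simp [h5,h6,h7]),
      Finset.card_insert_of_notMem (by simp [h8,h9]),
      Finset.card_insert_of_notMem (by simp [h10]),
      Finset.card_singleton]

theorem deg_five_of (hm : 4 ≤ m) (v : Fin (m+6)) (b1 b2 b3 b4 b5 : ℕ)
    (l1 : b1 < m+6) (l2 : b2 < m+6) (l3 : b3 < m+6) (l4 : b4 < m+6) (l5 : b5 < m+6)
    (hne : b1 ≠ b2 ∧ b1 ≠ b3 ∧ b1 ≠ b4 ∧ b1 ≠ b5 ∧ b2 ≠ b3 ∧ b2 ≠ b4 ∧ b2 ≠ b5 ∧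
      b3 ≠ b4 ∧ b3 ≠ b5 ∧ b4 ≠ b5)
    (hmem : ∀ u : Fin (m+6), (Gamma m).Adj v u ↔
      (u.val = b1 ∨ u.val = b2 ∨ u.val = b3 ∨ u.val = b4 ∨ u.val = b5)) :
    (Gamma m).degree v = 5 := by
  rw [← SimpleGraph.card_neighborFinset_eq_degree]
  have hset : (Gamma m).neighborFinset v =
      {(⟨b1, l1⟩ : Fin (m+6)), ⟨b2, l2⟩, ⟨b3, l3⟩, ⟨b4, l4⟩, ⟨b5, l5⟩} := by
    ext u
    rw [SimpleGraph.mem_neighborFinset, hmem]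
    simp only [Finset.mem_insert, Finset.mem_singleton, Fin.ext_iff]
  rw [hset]
  exact card_five (Fin.ne_of_val_ne hne.1) (Fin.ne_of_val_ne hne.2.1) (Fin.ne_of_val_ne hne.2.2.1)
    (Fin.ne_of_val_ne hne.2.2.2.1) (Fin.ne_of_val_ne hne.2.2.2.2.1) (Fin.ne_of_val_ne hne.2.2.2.2.2.1)
    (Fin.ne_of_val_ne hne.2.2.2.2.2.2.1) (Fin.ne_of_val_ne hne.2.2.2.2.2.2.2.1)
    (Fin.ne_of_val_ne hne.2.2.2.2.2.2.2.2.1) (Fin.ne_of_val_ne hne.2.2.2.2.2.2.2.2.2)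

theorem deg_cycle (hm4 : m % 4 = 0) (hm : 4 ≤ m) (v : Fin (m+6)) (hv : v.val < m) :
    (Gamma m).degree v = 5 := by
  have h4cases : v.val % 4 = 0 ∨ v.val % 4 = 1 ∨ v.val % 4 = 2 ∨ v.val % 4 = 3 := by omega
  rcases h4cases with hr | hr | hr | hr
  · by_cases h0 : v.val = 0
    · refine deg_five_of hm v (m-1) 1 m (m+3) (m+4) (by omega) (by omega) (by omega) (by omega)
        (by omega) (by omega) (fun u => ?_)
      rw [adj_iff hm]
      constructor
      · intro hu; have hb := u.isLt; unfold E rel1 at hu; omega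
      · rintro (h|h|h|h|h)
        · exact ⟨by omega, Or.inl (r2 (by omega) (by omega))⟩
        · exact ⟨by omega, Or.inl (r1 (by omega) (by omega))⟩
        · exact ⟨by omega, Or.inr (r3 (by omega) (by omega) (by omega))⟩
        · exact ⟨by omega, Or.inr (r6 (by omega) (by omega) (by omega))⟩
        · exact ⟨by omega, Or.inr (r7 (by omega) (by omega) (by omega))⟩
    · refine deg_five_of hm v (v.val-1) (v.val+1) m (m+3) (m+4) (by omega) (by omega) (by omega)
        (by omega) (by omega) (by omega) (fun u => ?_)
      rw [adj_iff hm]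
      constructor
      · intro hu; have hb := u.isLt; unfold E rel1 at hu; omega
      · rintro (h|h|h|h|h)
        · exact ⟨by omega, Or.inr (r1 (by omega) (by omega))⟩
        · exact ⟨by omega, Or.inl (r1 (by omega) (by omega))⟩
        · exact ⟨by omega, Or.inr (r3 (by omega) (by omega) (by omega))⟩
        · exact ⟨by omega, Or.inr (r6 (by omega) (by omega) (by omega))⟩
        · exact ⟨by omega, Or.inr (r7 (by omega) (by omega) (by omega))⟩
  · refine deg_five_of hm v (v.val-1) (v.val+1) m (m+1) (m+5) (by omega) (by omega) (by omega)
      (by omega) (by omega) (by omega) (fun u => ?_)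
    rw [adj_iff hm]
    constructor
    · intro hu; have hb := u.isLt; unfold E rel1 at hu; omega
    · rintro (h|h|h|h|h)
      · exact ⟨by omega, Or.inr (r1 (by omega) (by omega))⟩
      · exact ⟨by omega, Or.inl (r1 (by omega) (by omega))⟩
      · exact ⟨by omega, Or.inr (r3 (by omega) (by omega) (by omega))⟩
      · exact ⟨by omega, Or.inr (r4 (by omega) (by omega) (by omega))⟩
      · exact ⟨by omega, Or.inr (r8 (by omega) (by omega) (by omega))⟩
  · refine deg_five_of hm v (v.val-1) (v.val+1) (m+1) (m+2) (m+4) (by omega) (by omega) (by omega)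
      (by omega) (by omega) (by omega) (fun u => ?_)
    rw [adj_iff hm]
    constructor
    · intro hu; have hb := u.isLt; unfold E rel1 at hu; omega
    · rintro (h|h|h|h|h)
      · exact ⟨by omega, Or.inr (r1 (by omega) (by omega))⟩
      · exact ⟨by omega, Or.inl (r1 (by omega) (by omega))⟩
      · exact ⟨by omega, Or.inr (r4 (by omega) (by omega) (by omega))⟩
      · exact ⟨by omega, Or.inr (r5 (by omega) (by omega) (by omega))⟩
      · exact ⟨by omega, Or.inr (r7 (by omega) (by omega) (by omega))⟩
  · by_cases hlast : v.val = m - 1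
    · refine deg_five_of hm v (v.val-1) 0 (m+2) (m+3) (m+5) (by omega) (by omega) (by omega)
        (by omega) (by omega) (by omega) (fun u => ?_)
      rw [adj_iff hm]
      constructor
      · intro hu; have hb := u.isLt; unfold E rel1 at hu; omega
      · rintro (h|h|h|h|h)
        · exact ⟨by omega, Or.inr (r1 (by omega) (by omega))⟩
        · exact ⟨by omega, Or.inr (r2 (by omega) (by omega))⟩
        · exact ⟨by omega, Or.inr (r5 (by omega) (by omega) (by omega))⟩
        · exact ⟨by omega, Or.inr (r6 (by omega) (by omega) (by omega))⟩
        · exact ⟨by omega, Or.inr (r8 (by omega) (by omega) (by omega))⟩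
    · refine deg_five_of hm v (v.val-1) (v.val+1) (m+2) (m+3) (m+5) (by omega) (by omega) (by omega)
        (by omega) (by omega) (by omega) (fun u => ?_)
      rw [adj_iff hm]
      constructor
      · intro hu; have hb := u.isLt; unfold E rel1 at hu; omega
      · rintro (h|h|h|h|h)
        · exact ⟨by omega, Or.inr (r1 (by omega) (by omega))⟩
        · exact ⟨by omega, Or.inl (r1 (by omega) (by omega))⟩
        · exact ⟨by omega, Or.inr (r5 (by omega) (by omega) (by omega))⟩
        · exact ⟨by omega, Or.inr (r6 (by omega) (by omega) (by omega))⟩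
        · exact ⟨by omega, Or.inr (r8 (by omega) (by omega) (by omega))⟩

theorem deg_hub (hm4 : m % 4 = 0) (hm : 4 ≤ m) (v : Fin (m+6)) (hv1 : m ≤ v.val)
    (hv2 : v.val < m+4) : (Gamma m).degree v = m/2 + 1 := by
  have hcases : v.val = m ∨ v.val = m+1 ∨ v.val = m+2 ∨ v.val = m+3 := by omega
  rw [← SimpleGraph.card_neighborFinset_eq_degree]
  rcases hcases with hc | hc | hc | hc
  · have hset : (Gamma m).neighborFinset v = insert (⟨m+4, by omega⟩ : Fin (m+6))
        (Finset.univ.filter (fun u : Fin (m+6) => u.val < m ∧ (u.val % 4 = 0 ∨ u.val % 4 = 1))) := by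
      ext u
      rw [SimpleGraph.mem_neighborFinset, adj_iff hm]
      simp only [Finset.mem_insert, Finset.mem_filter, Finset.mem_univ, true_and, Fin.ext_iff]
      constructor
      · intro hu; have hb := u.isLt; unfold E rel1 at hu; omega
      · rintro (h | h)
        · exact ⟨by omega, Or.inl (r9 (by omega) (by omega))⟩
        · exact ⟨by omega, Or.inl (r3 (by omega) (by omega) (by omega))⟩
    rw [hset, Finset.card_insert_of_notMem (by
      simp only [Finset.mem_filter, Finset.mem_univ, true_and]; omega),
      card_filter_val (by omega) (fun x => x % 4 = 0 ∨ x % 4 = 1), Finset.filter_or,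
      Finset.card_union_of_disjoint (by
        rw [Finset.disjoint_left]; intro x hx1 hx2
        simp only [Finset.mem_filter, Finset.mem_range] at hx1 hx2; omega),
      card_mod4 hm4 (by omega), card_mod4 hm4 (by omega)]
    omega
  · have hset : (Gamma m).neighborFinset v = insert (⟨m+5, by omega⟩ : Fin (m+6))
        (Finset.univ.filter (fun u : Fin (m+6) => u.val < m ∧ (u.val % 4 = 1 ∨ u.val % 4 = 2))) := by
      ext u
      rw [SimpleGraph.mem_neighborFinset, adj_iff hm]
      simp only [Finset.mem_insert, Finset.mem_filter, Finset.mem_univ, true_and, Fin.ext_iff]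
      constructor
      · intro hu; have hb := u.isLt; unfold E rel1 at hu; omega
      · rintro (h | h)
        · exact ⟨by omega, Or.inl (r11 (by omega) (by omega))⟩
        · exact ⟨by omega, Or.inl (r4 (by omega) (by omega) (by omega))⟩
    rw [hset, Finset.card_insert_of_notMem (by
      simp only [Finset.mem_filter, Finset.mem_univ, true_and]; omega),
      card_filter_val (by omega) (fun x => x % 4 = 1 ∨ x % 4 = 2), Finset.filter_or,
      Finset.card_union_of_disjoint (by
        rw [Finset.disjoint_left]; intro x hx1 hx2
        simp only [Finset.mem_filter, Finset.mem_range] at hx1 hx2; omega),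
      card_mod4 hm4 (by omega), card_mod4 hm4 (by omega)]
    omega
  · have hset : (Gamma m).neighborFinset v = insert (⟨m+4, by omega⟩ : Fin (m+6))
        (Finset.univ.filter (fun u : Fin (m+6) => u.val < m ∧ (u.val % 4 = 2 ∨ u.val % 4 = 3))) := by
      ext u
      rw [SimpleGraph.mem_neighborFinset, adj_iff hm]
      simp only [Finset.mem_insert, Finset.mem_filter, Finset.mem_univ, true_and, Fin.ext_iff]
      constructor
      · intro hu; have hb := u.isLt; unfold E rel1 at hu; omega
      · rintro (h | h)
        · exact ⟨by omega, Or.inl (r10 (by omega) (by omega))⟩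
        · exact ⟨by omega, Or.inl (r5 (by omega) (by omega) (by omega))⟩
    rw [hset, Finset.card_insert_of_notMem (by
      simp only [Finset.mem_filter, Finset.mem_univ, true_and]; omega),
      card_filter_val (by omega) (fun x => x % 4 = 2 ∨ x % 4 = 3), Finset.filter_or,
      Finset.card_union_of_disjoint (by
        rw [Finset.disjoint_left]; intro x hx1 hx2
        simp only [Finset.mem_filter, Finset.mem_range] at hx1 hx2; omega),
      card_mod4 hm4 (by omega), card_mod4 hm4 (by omega)]
    omega
  · have hset : (Gamma m).neighborFinset v = insert (⟨m+5, by omega⟩ : Fin (m+6))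
        (Finset.univ.filter (fun u : Fin (m+6) => u.val < m ∧ (u.val % 4 = 3 ∨ u.val % 4 = 0))) := by
      ext u
      rw [SimpleGraph.mem_neighborFinset, adj_iff hm]
      simp only [Finset.mem_insert, Finset.mem_filter, Finset.mem_univ, true_and, Fin.ext_iff]
      constructor
      · intro hu; have hb := u.isLt; unfold E rel1 at hu; omega
      · rintro (h | h)
        · exact ⟨by omega, Or.inl (r12 (by omega) (by omega))⟩
        · exact ⟨by omega, Or.inl (r6 (by omega) (by omega) (by omega))⟩
    rw [hset, Finset.card_insert_of_notMem (by
      simp only [Finset.mem_filter, Finset.mem_univ, true_and]; omega),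
      card_filter_val (by omega) (fun x => x % 4 = 3 ∨ x % 4 = 0), Finset.filter_or,
      Finset.card_union_of_disjoint (by
        rw [Finset.disjoint_left]; intro x hx1 hx2
        simp only [Finset.mem_filter, Finset.mem_range] at hx1 hx2; omega),
      card_mod4 hm4 (by omega), card_mod4 hm4 (by omega)]
    omega

theorem deg_S (hm4 : m % 4 = 0) (hm : 4 ≤ m) (v : Fin (m+6)) (hv1 : m + 4 ≤ v.val) :
    (Gamma m).degree v = m/2 + 2 := by
  have hb := v.isLt
  have hcases : v.val = m+4 ∨ v.val = m+5 := by omega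
  rw [← SimpleGraph.card_neighborFinset_eq_degree]
  rcases hcases with hc | hc
  · have hset : (Gamma m).neighborFinset v = insert (⟨m, by omega⟩ : Fin (m+6))
        (insert (⟨m+2, by omega⟩ : Fin (m+6))
          (Finset.univ.filter (fun u : Fin (m+6) => u.val < m ∧ u.val % 2 = 0))) := by
      ext u
      rw [SimpleGraph.mem_neighborFinset, adj_iff hm]
      simp only [Finset.mem_insert, Finset.mem_filter, Finset.mem_univ, true_and, Fin.ext_iff]
      constructor
      · intro hu; have hb2 := u.isLt; unfold E rel1 at hu; omega
      · rintro (h | h | h)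
        · exact ⟨by omega, Or.inr (r9 (by omega) (by omega))⟩
        · exact ⟨by omega, Or.inr (r10 (by omega) (by omega))⟩
        · exact ⟨by omega, Or.inl (r7 (by omega) (by omega) (by omega))⟩
    rw [hset, Finset.card_insert_of_notMem (by
        simp only [Finset.mem_insert, Finset.mem_filter, Finset.mem_univ, true_and, Fin.ext_iff]
        omega),
      Finset.card_insert_of_notMem (by
        simp only [Finset.mem_filter, Finset.mem_univ, true_and]; omega),
      card_filter_val (by omega) (fun x => x % 2 = 0), card_mod2 (by omega) (by omega)]
  · have hset : (Gamma m).neighborFinset v = insert (⟨m+1, by omega⟩ : Fin (m+6))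
        (insert (⟨m+3, by omega⟩ : Fin (m+6))
          (Finset.univ.filter (fun u : Fin (m+6) => u.val < m ∧ u.val % 2 = 1))) := by
      ext u
      rw [SimpleGraph.mem_neighborFinset, adj_iff hm]
      simp only [Finset.mem_insert, Finset.mem_filter, Finset.mem_univ, true_and, Fin.ext_iff]
      constructor
      · intro hu; have hb2 := u.isLt; unfold E rel1 at hu; omega
      · rintro (h | h | h)
        · exact ⟨by omega, Or.inr (r11 (by omega) (by omega))⟩
        · exact ⟨by omega, Or.inr (r12 (by omega) (by omega))⟩
        · exact ⟨by omega, Or.inl (r8 (by omega) (by omega) (by omega))⟩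
    rw [hset, Finset.card_insert_of_notMem (by
        simp only [Finset.mem_insert, Finset.mem_filter, Finset.mem_univ, true_and, Fin.ext_iff]
        omega),
      Finset.card_insert_of_notMem (by
        simp only [Finset.mem_filter, Finset.mem_univ, true_and]; omega),
      card_filter_val (by omega) (fun x => x % 2 = 1), card_mod2 (by omega) (by omega)]

theorem iso_degree (f : Gamma m ≃g Gamma m) (v : Fin (m+6)) :
    (Gamma m).degree (f v) = (Gamma m).degree v := by
  rw [← SimpleGraph.card_neighborFinset_eq_degree, ← SimpleGraph.card_neighborFinset_eq_degree]
  apply Finset.card_bij (fun u _ => f.symm u)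
  · intro a ha
    rw [SimpleGraph.mem_neighborFinset] at ha ⊢
    have h := f.map_rel_iff (a := v) (b := f.symm a)
    rw [RelIso.apply_symm_apply] at h
    exact h.mp ha
  · intro a _ b _ hab
    have := congrArg f hab
    rwa [RelIso.apply_symm_apply, RelIso.apply_symm_apply] at this
  · intro b hb
    rw [SimpleGraph.mem_neighborFinset] at hb
    refine ⟨f b, ?_, by rw [RelIso.symm_apply_apply]⟩
    rw [SimpleGraph.mem_neighborFinset]
    exact f.map_rel_iff.mpr hb

theorem S_iff_deg (hm4 : m % 4 = 0) (hm : 4 ≤ m) (v : Fin (m+6)) :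
    (Gamma m).degree v = m/2 + 2 ↔ m+4 ≤ v.val := by
  constructor
  · intro h
    by_contra hc
    push_neg at hc
    by_cases h1 : v.val < m
    · rw [deg_cycle hm4 hm v h1] at h; omega
    · rw [deg_hub hm4 hm v (by omega) (by omega)] at h; omega
  · exact deg_S hm4 hm v

theorem class_S (hm4 : m % 4 = 0) (hm : 4 ≤ m) (f : Gamma m ≃g Gamma m) (v : Fin (m+6)) :
    m+4 ≤ (f v).val ↔ m+4 ≤ v.val := by
  rw [← S_iff_deg hm4 hm, ← S_iff_deg hm4 hm, iso_degree]

theorem rel1_hub' {i j : ℕ} (hm4 : m % 4 = 0) (h1 : i = m + j % 4) (hj : j < m) :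
    rel1 m i j := by
  have h : j % 4 = 0 ∨ j % 4 = 1 ∨ j % 4 = 2 ∨ j % 4 = 3 := by omega
  rcases h with h|h|h|h
  · exact r3 (by omega) hj (by omega)
  · exact r4 (by omega) hj (by omega)
  · exact r5 (by omega) hj (by omega)
  · exact r6 (by omega) hj (by omega)

theorem rel1_S' {i j : ℕ} (hm4 : m % 4 = 0) (h1 : i = m + 4 + j % 2) (hj : j < m) :
    rel1 m i j := by
  have h : j % 2 = 0 ∨ j % 2 = 1 := by omega
  rcases h with h|h
  · exact r7 (by omega) hj (by omega)
  · exact r8 (by omega) hj (by omega)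

theorem rel1_hubS' {i j : ℕ} (hm4 : m % 4 = 0) (k : ℕ) (h1 : i = m + k % 4)
    (h2 : j = m + 4 + k % 2) : rel1 m i j := by
  have h : k % 4 = 0 ∨ k % 4 = 1 ∨ k % 4 = 2 ∨ k % 4 = 3 := by omega
  rcases h with h|h|h|h
  · exact r9 (by omega) (by omega)
  · exact r11 (by omega) (by omega)
  · exact r10 (by omega) (by omega)
  · exact r12 (by omega) (by omega)

def samecolAdj (m : ℕ) (v u : Fin (m+6)) : Prop :=
  u.val < m + 4 ∧ (Gamma m).Adj v u ∧
    ∃ s : Fin (m+6), m+4 ≤ s.val ∧ (Gamma m).Adj s v ∧ (Gamma m).Adj s u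

def P (m : ℕ) (v : Fin (m+6)) : Prop := ∃! u, samecolAdj m v u

theorem P_map (hm4 : m % 4 = 0) (hm : 4 ≤ m) (f : Gamma m ≃g Gamma m) (v : Fin (m+6))
    (h : P m v) : P m (f v) := by
  obtain ⟨u, ⟨hu4, hadj, s, hs, hsv, hsu⟩, huniq⟩ := h
  refine ⟨f u, ⟨?_, f.map_rel_iff.mpr hadj, f s, ?_, f.map_rel_iff.mpr hsv,
    f.map_rel_iff.mpr hsu⟩, ?_⟩
  · have := class_S hm4 hm f u; omega
  · exact (class_S hm4 hm f s).mpr hs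
  · intro u' hu'
    obtain ⟨hu'4, hadj', s', hs', hs'v, hs'u'⟩ := hu'
    have h1 : samecolAdj m v (f.symm u') := by
      refine ⟨?_, ?_, f.symm s', ?_, ?_, ?_⟩
      · have := class_S hm4 hm f (f.symm u'); rw [RelIso.apply_symm_apply] at this; omega
      · have h2 := f.map_rel_iff (a := v) (b := f.symm u')
        rw [RelIso.apply_symm_apply] at h2
        exact h2.mp hadj'
      · have := class_S hm4 hm f (f.symm s'); rw [RelIso.apply_symm_apply] at this; omega
      · have h2 := f.map_rel_iff (a := f.symm s') (b := v)
        rw [RelIso.apply_symm_apply] at h2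
        exact h2.mp hs'v
      · have h2 := f.map_rel_iff (a := f.symm s') (b := f.symm u')
        rw [RelIso.apply_symm_apply, RelIso.apply_symm_apply] at h2
        exact h2.mp hs'u'
    have h2 := huniq _ h1
    rw [← h2, RelIso.apply_symm_apply]

theorem P_cycle (hm4 : m % 4 = 0) (hm : 4 ≤ m) (v : Fin (m+6)) (hv : v.val < m) : P m v := by
  refine ⟨⟨m + v.val % 4, by omega⟩, ⟨by show m + v.val % 4 < m + 4; omega, ?_,
    ⟨m + 4 + v.val % 2, by omega⟩, by show m + 4 ≤ m + 4 + v.val % 2; omega, ?_, ?_⟩, ?_⟩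
  · rw [adj_iff hm]
    show E m v.val (m + v.val % 4)
    exact ⟨by omega, Or.inr (rel1_hub' hm4 (by omega) hv)⟩
  · rw [adj_iff hm]
    show E m (m + 4 + v.val % 2) v.val
    exact ⟨by omega, Or.inl (rel1_S' hm4 (by omega) hv)⟩
  · rw [adj_iff hm]
    show E m (m + 4 + v.val % 2) (m + v.val % 4)
    exact ⟨by omega, Or.inr (rel1_hubS' hm4 v.val (by omega) (by omega))⟩
  · intro u' hu'
    obtain ⟨hu'4, hadj', s', hs', hs'v, hs'u'⟩ := hu'
    rw [adj_iff hm] at hadj' hs'v hs'u'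
    have hb' := u'.isLt
    have hbs := s'.isLt
    apply Fin.ext
    show u'.val = m + v.val % 4
    unfold E rel1 at hadj' hs'v hs'u'
    omega

theorem P_hub (hm4 : m % 4 = 0) (hm8 : 8 ≤ m) (v : Fin (m+6)) (hv1 : m ≤ v.val)
    (hv2 : v.val < m + 4) : ¬ P m v := by
  have hm : 4 ≤ m := by omega
  rintro ⟨u, _, huniq⟩
  have h1 : samecolAdj m v ⟨v.val - m, by omega⟩ := by
    refine ⟨by show v.val - m < m + 4; omega, ?_,
      ⟨m + 4 + v.val % 2, by omega⟩, by show m + 4 ≤ m + 4 + v.val % 2; omega, ?_, ?_⟩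
    · rw [adj_iff hm]
      show E m v.val (v.val - m)
      exact ⟨by omega, Or.inl (rel1_hub' hm4 (by omega) (by omega))⟩
    · rw [adj_iff hm]
      show E m (m + 4 + v.val % 2) v.val
      exact ⟨by omega, Or.inr (rel1_hubS' hm4 v.val (by omega) (by omega))⟩
    · rw [adj_iff hm]
      show E m (m + 4 + v.val % 2) (v.val - m)
      exact ⟨by omega, Or.inl (rel1_S' hm4 (by omega) (by omega))⟩
  have h2 : samecolAdj m v ⟨v.val - m + 4, by omega⟩ := by
    refine ⟨by show v.val - m + 4 < m + 4; omega, ?_,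
      ⟨m + 4 + v.val % 2, by omega⟩, by show m + 4 ≤ m + 4 + v.val % 2; omega, ?_, ?_⟩
    · rw [adj_iff hm]
      show E m v.val (v.val - m + 4)
      exact ⟨by omega, Or.inl (rel1_hub' hm4 (by omega) (by omega))⟩
    · rw [adj_iff hm]
      show E m (m + 4 + v.val % 2) v.val
      exact ⟨by omega, Or.inr (rel1_hubS' hm4 v.val (by omega) (by omega))⟩
    · rw [adj_iff hm]
      show E m (m + 4 + v.val % 2) (v.val - m + 4)
      exact ⟨by omega, Or.inl (rel1_S' hm4 (by omega) (by omega))⟩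
  have e1 := huniq _ h1
  have e2 := huniq _ h2
  have he : v.val - m = v.val - m + 4 := congrArg Fin.val (e1.trans e2.symm)
  omega

theorem class_C (hm4 : m % 4 = 0) (hm : 4 ≤ m) (f : Gamma m ≃g Gamma m) (v : Fin (m+6))
    (hv : v.val < m) : (f v).val < m := by
  by_contra hc
  push_neg at hc
  have hhub2 : (f v).val < m + 4 := by
    have h := class_S hm4 hm f v
    have hb := v.isLt
    have hb2 := (f v).isLt
    omega
  by_cases h8 : 8 ≤ m
  · exact P_hub hm4 h8 (f v) hc hhub2 (P_map hm4 hm f v (P_cycle hm4 hm v hv))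
  · have h1 := deg_cycle hm4 hm v hv
    have h2 := deg_hub hm4 hm (f v) hc hhub2
    have h3 := iso_degree f v
    omega

theorem class_C_iff (hm4 : m % 4 = 0) (hm : 4 ≤ m) (f : Gamma m ≃g Gamma m) (v : Fin (m+6)) :
    (f v).val < m ↔ v.val < m := by
  constructor
  · intro h
    have h2 := class_C hm4 hm f.symm (f v) h
    rwa [RelIso.symm_apply_apply] at h2
  · exact class_C hm4 hm f v

theorem class_S_iff (hm4 : m % 4 = 0) (hm : 4 ≤ m) (f : Gamma m ≃g Gamma m) (v : Fin (m+6)) :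
    m + 4 ≤ (f v).val ↔ m + 4 ≤ v.val := class_S hm4 hm f v

theorem stab_id (hm4 : m % 4 = 0) (hm : 4 ≤ m) (f : Gamma m ≃g Gamma m)
    (v0 : Fin (m+6)) (hv0 : v0.val = 0) (h0 : f v0 = v0) : f = 1 := by
  have hC := class_C_iff hm4 hm f
  have hS := class_S_iff hm4 hm f
  obtain ⟨v1, hv1⟩ : ∃ v : Fin (m+6), v.val = 1 := ⟨⟨1, by omega⟩, rfl⟩
  obtain ⟨v2, hv2⟩ : ∃ v : Fin (m+6), v.val = 2 := ⟨⟨2, by omega⟩, rfl⟩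
  obtain ⟨v3, hv3⟩ : ∃ v : Fin (m+6), v.val = 3 := ⟨⟨3, by omega⟩, rfl⟩
  obtain ⟨w0, hw0⟩ : ∃ v : Fin (m+6), v.val = m := ⟨⟨m, by omega⟩, rfl⟩
  obtain ⟨w1, hw1⟩ : ∃ v : Fin (m+6), v.val = m+1 := ⟨⟨m+1, by omega⟩, rfl⟩
  obtain ⟨w2, hw2⟩ : ∃ v : Fin (m+6), v.val = m+2 := ⟨⟨m+2, by omega⟩, rfl⟩
  obtain ⟨w3, hw3⟩ : ∃ v : Fin (m+6), v.val = m+3 := ⟨⟨m+3, by omega⟩, rfl⟩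
  obtain ⟨w4, hw4⟩ : ∃ v : Fin (m+6), v.val = m+4 := ⟨⟨m+4, by omega⟩, rfl⟩
  obtain ⟨w5, hw5⟩ : ∃ v : Fin (m+6), v.val = m+5 := ⟨⟨m+5, by omega⟩, rfl⟩
  have hfv0 : (f v0).val = 0 := by rw [h0, hv0]
  -- pin f w4 = w4 (uses only f v0)
  have hfw4 : (f w4).val = m + 4 := by
    have a0 : (Gamma m).Adj w4 v0 := by
      rw [adj_iff hm]
      exact ⟨by omega, Or.inl (r7 (by omega) (by omega) (by omega))⟩
    have b0 := f.map_rel_iff.mpr a0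
    rw [adj_iff hm] at b0
    have hcl := (hS w4).mpr (by omega)
    have hb := (f w4).isLt
    unfold E rel1 at b0
    omega
  -- f v1 is a cycle neighbor of f v0
  have hfv1m : (f v1).val = 1 ∨ (f v1).val = m - 1 := by
    have a0 : (Gamma m).Adj v0 v1 := by
      rw [adj_iff hm]
      exact ⟨by omega, Or.inl (r1 (by omega) (by omega))⟩
    have b0 := f.map_rel_iff.mpr a0
    rw [adj_iff hm] at b0
    have hcl := (hC v1).mpr (by omega)
    unfold E rel1 at b0
    omega
  rcases hfv1m with h1v | h1v
  · -- rotation-fixing case : f = 1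
    have key : ∀ i, i < m → ∀ v : Fin (m+6), v.val = i → (f v).val = i := by
      intro i
      induction i using Nat.strong_induction_on with
      | _ i IH =>
        intro hi v hv
        by_cases hi0 : i = 0
        · have hveq : v = v0 := Fin.ext (by omega)
          rw [hveq, h0]; omega
        · by_cases hi1 : i = 1
          · have hveq : v = v1 := Fin.ext (by omega)
            rw [hveq]; omega
          · obtain ⟨prev, hprev⟩ : ∃ w : Fin (m+6), w.val = i - 1 := ⟨⟨i-1, by omega⟩, rfl⟩
            have hp := IH (i-1) (by omega) (by omega) prev hprev
            have hadj : (Gamma m).Adj prev v := by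
              rw [adj_iff hm]
              exact ⟨by omega, Or.inl (r1 (by omega) (by omega))⟩
            have ha := f.map_rel_iff.mpr hadj
            rw [adj_iff hm] at ha
            have hCv : (f v).val < m := (hC v).mpr (by omega)
            have hne : (f v).val ≠ i - 2 := by
              intro he
              obtain ⟨w, hw⟩ : ∃ w : Fin (m+6), w.val = i - 2 := ⟨⟨i-2, by omega⟩, rfl⟩
              have hw2 := IH (i-2) (by omega) (by omega) w hw
              have heq : f v = f w := Fin.ext (by omega)
              have h3 : v = w := f.injective heq
              have h4 : v.val = w.val := congrArg Fin.val h3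
              omega
            unfold E rel1 at ha
            omega
    -- pin the hubs
    have hfw0 : (f w0).val = m := by
      have a0 : (Gamma m).Adj w0 v0 := by
        rw [adj_iff hm]
        exact ⟨by omega, Or.inl (r3 (by omega) (by omega) (by omega))⟩
      have a1 : (Gamma m).Adj w0 v1 := by
        rw [adj_iff hm]
        exact ⟨by omega, Or.inl (r3 (by omega) (by omega) (by omega))⟩
      have b0 := f.map_rel_iff.mpr a0
      have b1 := f.map_rel_iff.mpr a1
      rw [adj_iff hm] at b0 b1
      have hcl1 : ¬ ((f w0).val < m) := fun hcon => by have := (hC w0).mp hcon; omega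
      have hcl2 : ¬ (m + 4 ≤ (f w0).val) := fun hcon => by have := (hS w0).mp hcon; omega
      have hb := (f w0).isLt
      unfold E rel1 at b0 b1
      omega
    have hfw1 : (f w1).val = m + 1 := by
      have a0 : (Gamma m).Adj w1 v1 := by
        rw [adj_iff hm]
        exact ⟨by omega, Or.inl (r4 (by omega) (by omega) (by omega))⟩
      have a1 : (Gamma m).Adj w1 v2 := by
        rw [adj_iff hm]
        exact ⟨by omega, Or.inl (r4 (by omega) (by omega) (by omega))⟩
      have b0 := f.map_rel_iff.mpr a0
      have b1 := f.map_rel_iff.mpr a1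
      rw [adj_iff hm] at b0 b1
      have hk1 := key 1 (by omega) v1 hv1
      have hk2 := key 2 (by omega) v2 hv2
      have hcl1 : ¬ ((f w1).val < m) := fun hcon => by have := (hC w1).mp hcon; omega
      have hcl2 : ¬ (m + 4 ≤ (f w1).val) := fun hcon => by have := (hS w1).mp hcon; omega
      have hb := (f w1).isLt
      unfold E rel1 at b0 b1
      omega
    have hfw2 : (f w2).val = m + 2 := by
      have a0 : (Gamma m).Adj w2 v2 := by
        rw [adj_iff hm]
        exact ⟨by omega, Or.inl (r5 (by omega) (by omega) (by omega))⟩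
      have a1 : (Gamma m).Adj w2 v3 := by
        rw [adj_iff hm]
        exact ⟨by omega, Or.inl (r5 (by omega) (by omega) (by omega))⟩
      have b0 := f.map_rel_iff.mpr a0
      have b1 := f.map_rel_iff.mpr a1
      rw [adj_iff hm] at b0 b1
      have hk2 := key 2 (by omega) v2 hv2
      have hk3 := key 3 (by omega) v3 hv3
      have hcl1 : ¬ ((f w2).val < m) := fun hcon => by have := (hC w2).mp hcon; omega
      have hcl2 : ¬ (m + 4 ≤ (f w2).val) := fun hcon => by have := (hS w2).mp hcon; omega
      have hb := (f w2).isLt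
      unfold E rel1 at b0 b1
      omega
    have hfw3 : (f w3).val = m + 3 := by
      have hcl1 : ¬ ((f w3).val < m) := fun hcon => by have := (hC w3).mp hcon; omega
      have hcl2 : ¬ (m + 4 ≤ (f w3).val) := fun hcon => by have := (hS w3).mp hcon; omega
      have hb := (f w3).isLt
      have hne0 : (f w3).val ≠ m := by
        intro he
        have : w3 = w0 := f.injective (Fin.ext (by omega))
        have := congrArg Fin.val this
        omega
      have hne1 : (f w3).val ≠ m+1 := by
        intro he
        have : w3 = w1 := f.injective (Fin.ext (by omega))
        have := congrArg Fin.val this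
        omega
      have hne2 : (f w3).val ≠ m+2 := by
        intro he
        have : w3 = w2 := f.injective (Fin.ext (by omega))
        have := congrArg Fin.val this
        omega
      omega
    have hfw5 : (f w5).val = m + 5 := by
      have hcl := (hS w5).mpr (by omega)
      have hb := (f w5).isLt
      have hne0 : (f w5).val ≠ m+4 := by
        intro he
        have : w5 = w4 := f.injective (Fin.ext (by omega))
        have := congrArg Fin.val this
        omega
      omega
    apply RelIso.ext
    intro v
    have hb := v.isLt
    have h1v : (1 : Gamma m ≃g Gamma m) v = v := rfl
    rw [h1v]
    by_cases hc : v.val < m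
    · exact Fin.ext (key v.val hc v rfl)
    · apply Fin.ext
      have hcase : v.val = m ∨ v.val = m+1 ∨ v.val = m+2 ∨ v.val = m+3 ∨
          v.val = m+4 ∨ v.val = m+5 := by omega
      rcases hcase with h|h|h|h|h|h
      · have : v = w0 := Fin.ext (by omega)
        rw [this]; omega
      · have : v = w1 := Fin.ext (by omega)
        rw [this]; omega
      · have : v = w2 := Fin.ext (by omega)
        rw [this]; omega
      · have : v = w3 := Fin.ext (by omega)
        rw [this]; omega
      · have : v = w4 := Fin.ext (by omega)
        rw [this]; omega
      · have : v = w5 := Fin.ext (by omega)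
        rw [this]; omega
  · -- reflection case : contradiction
    exfalso
    have hfw0 : (f w0).val = m + 3 := by
      have a0 : (Gamma m).Adj w0 v0 := by
        rw [adj_iff hm]
        exact ⟨by omega, Or.inl (r3 (by omega) (by omega) (by omega))⟩
      have a1 : (Gamma m).Adj w0 v1 := by
        rw [adj_iff hm]
        exact ⟨by omega, Or.inl (r3 (by omega) (by omega) (by omega))⟩
      have b0 := f.map_rel_iff.mpr a0
      have b1 := f.map_rel_iff.mpr a1
      rw [adj_iff hm] at b0 b1
      have hcl1 : ¬ ((f w0).val < m) := fun hcon => by have := (hC w0).mp hcon; omega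
      have hcl2 : ¬ (m + 4 ≤ (f w0).val) := fun hcon => by have := (hS w0).mp hcon; omega
      have hb := (f w0).isLt
      unfold E rel1 at b0 b1
      omega
    have a04 : (Gamma m).Adj w0 w4 := by
      rw [adj_iff hm]
      exact ⟨by omega, Or.inl (r9 (by omega) (by omega))⟩
    have b04 := f.map_rel_iff.mpr a04
    rw [adj_iff hm] at b04
    unfold E rel1 at b04
    omega

theorem aut_eq_of_eq_at_zero (hm4 : m % 4 = 0) (hm : 4 ≤ m)
    (v0 : Fin (m+6)) (hv0 : v0.val = 0)
    (f h : Gamma m ≃g Gamma m) (e : f v0 = h v0) : f = h := by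
  have h1 : (h⁻¹ * f) v0 = v0 := by
    show h.symm (f v0) = v0
    rw [e]
    exact h.symm_apply_apply v0
  have h2 := stab_id hm4 hm (h⁻¹ * f) v0 hv0 h1
  have h3 : h⁻¹ * f = 1 := h2
  exact (inv_mul_eq_one.mp h3).symm

theorem aut_card_le (hm4 : m % 4 = 0) (hm : 4 ≤ m) (v0 : Fin (m+6)) (hv0 : v0.val = 0) :
    Nat.card (Gamma m ≃g Gamma m) ≤ m := by
  have hinj : Function.Injective (fun f : Gamma m ≃g Gamma m =>
      (⟨(f v0).val, (class_C_iff hm4 hm f v0).mpr (by omega)⟩ : Fin m)) := by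
    intro f h e
    have e2 : (f v0).val = (h v0).val := congrArg (Fin.val : Fin m → ℕ) e
    exact aut_eq_of_eq_at_zero hm4 hm v0 hv0 f h (Fin.ext e2)
  calc Nat.card (Gamma m ≃g Gamma m) ≤ Nat.card (Fin m) := Nat.card_le_card_of_injective _ hinj
    _ = m := by simp

end Main


/-- `Aut(Γ_m)` is the cyclic group generated by `g`;
    in particular `Aut(Γ_m) ≅ ℤ/2^n ℤ`. -/
theorem stmt7 (n m : ℕ) (hn : 2 ≤ n) (hm : m = 2 ^ n) :
    ∃ φ : Gamma m ≃g Gamma m, ⇑φ = gFun m ∧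
      (∀ f : Gamma m ≃g Gamma m, f ∈ Subgroup.zpowers φ) ∧
      Nonempty ((Gamma m ≃g Gamma m) ≃* Multiplicative (ZMod (2 ^ n))) := by
  have hm4 : m % 4 = 0 := by
    rw [hm, show n = 2 + (n - 2) by omega, pow_add]
    simp [Nat.mul_mod_right]
  have hmle : 4 ≤ m := by
    rw [hm]
    calc 4 = 2^2 := rfl
    _ ≤ 2^n := Nat.pow_le_pow_right (by norm_num) hn
  obtain ⟨v0, hv0⟩ : ∃ v : Fin (m+6), v.val = 0 := ⟨⟨0, by omega⟩, rfl⟩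
  haveI hfin : Finite (Gamma m ≃g Gamma m) := by
    apply Finite.of_injective (fun f : Gamma m ≃g Gamma m => f v0)
    intro f h e
    exact aut_eq_of_eq_at_zero hm4 hmle v0 hv0 f h e
  have hord : orderOf (phi m hm4 hmle) = m := phi_order hm4 hmle
  have hzc : Nat.card (Subgroup.zpowers (phi m hm4 hmle)) = m := by
    rw [Nat.card_zpowers, hord]
  have hle1 := aut_card_le hm4 hmle v0 hv0
  have hle2 : Nat.card (Subgroup.zpowers (phi m hm4 hmle)) ≤ Nat.card (Gamma m ≃g Gamma m) :=
    Subgroup.card_le_card_group _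
  have hGcard : Nat.card (Gamma m ≃g Gamma m) = m := by omega
  have htop : Subgroup.zpowers (phi m hm4 hmle) = ⊤ :=
    Subgroup.eq_top_of_card_eq _ (by rw [hzc, hGcard])
  have hmem : ∀ x : Gamma m ≃g Gamma m, x ∈ Subgroup.zpowers (phi m hm4 hmle) := by
    intro x
    rw [htop]
    exact Subgroup.mem_top x
  refine ⟨phi m hm4 hmle, rfl, hmem, ?_⟩
  have hcyc : IsCyclic (Gamma m ≃g Gamma m) := ⟨⟨phi m hm4 hmle, fun x => hmem x⟩⟩
  have hGcard2 : Nat.card (Gamma m ≃g Gamma m) = 2 ^ n := by rw [hGcard, hm]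
  exact ⟨hGcard2 ▸ (zmodCyclicMulEquiv hcyc).symm⟩
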